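/- Let G be a finite group with no non-trivial one-dimensional complex representations (i.e. the abelianization of G is trivial), acting transitively on a finite set X. Let M : X × X → ℂ be a G-invariant Hermitian kernel, i.e. M(g·a,g·b) = M(a,b). Then every eigenspace of M on which G acts non-trivially has dimension at least the minimal dimension of a non-trivial irreducible complex representation of G. -/

import Mathlib

open scoped InnerProductSpace

lemma exists_irred {G : Type*} [Group G] {V : Type*} [NormedAddCommGroup V]
    [InnerProductSpace ℂ V] [FiniteDimensional ℂ V]
    (ρ : Representation ℂ G V)
    (hρ : ∀ (g : G) (v w : V), ⟪ρ g v, ρ g w⟫_ℂ = ⟪v, w⟫_ℂ) :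
    ∀ (W : Submodule ℂ V), (∀ (g : G), ∀ v ∈ W, ρ g v ∈ W) →
      (∃ g : G, ∃ v ∈ W, ρ g v ≠ v) →
      ∃ W' : Submodule ℂ V, W' ≤ W ∧ (∀ (g : G), ∀ v ∈ W', ρ g v ∈ W') ∧
        (∃ g : G, ∃ v ∈ W', ρ g v ≠ v) ∧
        (∀ U : Submodule ℂ V, U ≤ W' → (∀ (g : G), ∀ v ∈ U, ρ g v ∈ U) →
          U = ⊥ ∨ U = W') := by
  -- invariance of orthogonal complements
  have horth : ∀ (U : Submodule ℂ V), (∀ (g : G), ∀ v ∈ U, ρ g v ∈ U) →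
      (∀ (g : G), ∀ v ∈ Uᗮ, ρ g v ∈ Uᗮ) := by
    intro U hU g v hv
    intro u hu
    have h1 : ρ g⁻¹ u ∈ U := hU g⁻¹ u hu
    have h2 : ⟪ρ g⁻¹ u, v⟫_ℂ = 0 := hv _ h1
    have h3 : ⟪ρ g (ρ g⁻¹ u), ρ g v⟫_ℂ = ⟪ρ g⁻¹ u, v⟫_ℂ := hρ g _ _
    have h4 : ρ g (ρ g⁻¹ u) = u := by
      have := LinearMap.congr_fun (ρ.map_mul g g⁻¹).symm u
      simpa using this
    rw [h4] at h3
    rw [h3, h2]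
  suffices h : ∀ (n : ℕ) (W : Submodule ℂ V), Module.finrank ℂ W ≤ n →
      (∀ (g : G), ∀ v ∈ W, ρ g v ∈ W) →
      (∃ g : G, ∃ v ∈ W, ρ g v ≠ v) →
      ∃ W' : Submodule ℂ V, W' ≤ W ∧ (∀ (g : G), ∀ v ∈ W', ρ g v ∈ W') ∧
        (∃ g : G, ∃ v ∈ W', ρ g v ≠ v) ∧
        (∀ U : Submodule ℂ V, U ≤ W' → (∀ (g : G), ∀ v ∈ U, ρ g v ∈ U) →
          U = ⊥ ∨ U = W') by
    intro W
    exact h _ W le_rfl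
  intro n
  induction n using Nat.strong_induction_on with
  | _ n ih =>
  intro W hn hWinv hWnt
  by_cases hirr : ∀ U : Submodule ℂ V, U ≤ W → (∀ (g : G), ∀ v ∈ U, ρ g v ∈ U) →
      U = ⊥ ∨ U = W
  · exact ⟨W, le_rfl, hWinv, hWnt, hirr⟩
  · push_neg at hirr
    obtain ⟨U, hUW, hUinv, hUbot, hUne⟩ := hirr
    set U' : Submodule ℂ V := Uᗮ ⊓ W with hU'def
    have hU'inv : ∀ (g : G), ∀ v ∈ U', ρ g v ∈ U' := fun g v hv =>
      ⟨horth U hUinv g v hv.1, hWinv g v hv.2⟩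
    have hsup : U ⊔ U' = W := Submodule.sup_orthogonal_inf_of_hasOrthogonalProjection hUW
    have hU'W : U' ≤ W := inf_le_right
    have hU'ne : U' ≠ W := by
      intro h
      apply hUbot
      have hUorth : U ≤ Uᗮ := by
        intro v hv
        have hv' : v ∈ U' := h.symm ▸ hUW hv
        exact hv'.1
      have hle : U ≤ U ⊓ Uᗮ := le_inf le_rfl hUorth
      rw [U.inf_orthogonal_eq_bot] at hle
      exact le_bot_iff.mp hle
    have hUlt : Module.finrank ℂ U < n :=
      lt_of_lt_of_le (Submodule.finrank_lt_finrank_of_lt (lt_of_le_of_ne hUW hUne)) hn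
    have hU'lt : Module.finrank ℂ U' < n :=
      lt_of_lt_of_le (Submodule.finrank_lt_finrank_of_lt (lt_of_le_of_ne hU'W hU'ne)) hn
    -- nontriviality on U or U'
    have : (∃ g : G, ∃ v ∈ U, ρ g v ≠ v) ∨ (∃ g : G, ∃ v ∈ U', ρ g v ≠ v) := by
      by_contra h
      push_neg at h
      obtain ⟨h1, h2⟩ := h
      obtain ⟨g, v, hvW, hgv⟩ := hWnt
      rw [← hsup] at hvW
      obtain ⟨u, hu, u', hu', rfl⟩ := Submodule.mem_sup.mp hvW
      exact hgv (by rw [map_add, h1 g u hu, h2 g u' hu'])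
    rcases this with h | h
    · obtain ⟨W', h1, h2, h3, h4⟩ := ih _ hUlt U le_rfl hUinv h
      exact ⟨W', h1.trans hUW, h2, h3, h4⟩
    · obtain ⟨W', h1, h2, h3, h4⟩ := ih _ hU'lt U' le_rfl hU'inv h
      exact ⟨W', h1.trans hU'W, h2, h3, h4⟩

open scoped InnerProductSpace

section helpers

variable {G : Type*} [Group G]

/-- The permutation representation on `EuclideanSpace ℂ X`. -/
def rhoPerm (G X : Type*) [Group G] [Fintype X] [MulAction G X] :
    Representation ℂ G (EuclideanSpace ℂ X) where
  toFun g :=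
    { toFun := fun f => (WithLp.toLp 2 (fun x => f (g⁻¹ • x)) : EuclideanSpace ℂ X)
      map_add' := fun f h => rfl
      map_smul' := fun c f => rfl }
  map_one' := by
    ext f x
    show f ((1 : G)⁻¹ • x) = f x
    rw [inv_one, one_smul]
  map_mul' g h := by
    ext f x
    show f ((g * h)⁻¹ • x) = f (h⁻¹ • g⁻¹ • x)
    rw [mul_inv_rev, mul_smul]

/-- restriction of a representation to an invariant submodule -/
def resRep {V : Type*} [AddCommGroup V] [Module ℂ V] (ρ : Representation ℂ G V)
    (W : Submodule ℂ V) (h : ∀ (g : G), ∀ v ∈ W, ρ g v ∈ W) : Representation ℂ G W where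
  toFun g := (ρ g).restrict (fun v hv => h g v hv)
  map_one' := by
    ext v
    simp [LinearMap.restrict_apply]
  map_mul' g h' := by
    ext v
    simp [LinearMap.restrict_apply, Module.End.mul_apply]

/-- conjugation of a representation by a linear equivalence -/
def conjRep {V V' : Type*} [AddCommGroup V] [Module ℂ V] [AddCommGroup V'] [Module ℂ V']
    (e : V ≃ₗ[ℂ] V') (ρ : Representation ℂ G V) : Representation ℂ G V' where
  toFun g := e.conj (ρ g)
  map_one' := by
    ext v
    simp [LinearEquiv.conj_apply]
  map_mul' g h := by
    ext v
    simp [LinearEquiv.conj_apply, Module.End.mul_apply]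

end helpers

/-- if a finite group `G` with no non-trivial one-dimensional complex
representations acts transitively on a finite set `X` and `M` is a `G`-invariant
Hermitian kernel, then every eigenspace of `M` on which `G` acts non-trivially has
dimension at least the minimal dimension of a non-trivial irreducible complex
representation of `G`. -/
theorem stmt9 {G X : Type*} [Group G] [Finite G] [Fintype X] [DecidableEq X]
    [MulAction G X] [MulAction.IsPretransitive G X]
    (hab : ∀ φ : G →* ℂˣ, φ = 1)
    (M : Matrix X X ℂ) (hherm : M.IsHermitian)
    (hinv : ∀ (g : G) (a b : X), M (g • a) (g • b) = M a b)
    (μ : ℂ)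
    (hact : ∃ f ∈ Module.End.eigenspace (Matrix.mulVecLin M) μ,
      ∃ g : G, (fun x => f (g⁻¹ • x)) ≠ f)
    (k : ℕ)
    (hk : ∀ (V : Type) [AddCommGroup V] [Module ℂ V]
      (ρ : Representation ℂ G V),
      (∀ W : Submodule ℂ V, (∀ (g : G) (v : V), v ∈ W → ρ g v ∈ W) → W = ⊥ ∨ W = ⊤) →
      (∃ g : G, ρ g ≠ 1) → k ≤ Module.finrank ℂ V) :
    k ≤ Module.finrank ℂ (Module.End.eigenspace (Matrix.mulVecLin M) μ) := by
  classical
  set ρ := rhoPerm G X with hρdef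
  -- inner product invariance
  have hρ : ∀ (g : G) (v w : EuclideanSpace ℂ X), ⟪ρ g v, ρ g w⟫_ℂ = ⟪v, w⟫_ℂ := by
    intro g v w
    simp only [PiLp.inner_apply]
    have : (ρ g v : EuclideanSpace ℂ X) = fun x => v (g⁻¹ • x) := rfl
    exact Fintype.sum_equiv (MulAction.toPerm g⁻¹) _ _ (fun x => rfl)
  -- the eigenspace, viewed inside EuclideanSpace
  set E : Submodule ℂ (EuclideanSpace ℂ X) :=
    (Module.End.eigenspace (Matrix.mulVecLin M) μ).comap
      (WithLp.linearEquiv 2 ℂ (X → ℂ)).toLinearMap with hEdef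
  -- invariance of the eigenspace
  have hEinv : ∀ (g : G), ∀ f ∈ E, ρ g f ∈ E := by
    intro g f hf
    rw [hEdef, Submodule.mem_comap, Module.End.mem_eigenspace_iff] at hf ⊢
    funext x
    change (Matrix.mulVecLin M) (ρ g f).ofLp x = (μ • (ρ g f).ofLp) x
    have hfx : Matrix.mulVec M f.ofLp (g⁻¹ • x) = μ * f (g⁻¹ • x) := by
      have := congrFun hf (g⁻¹ • x)
      simpa [Matrix.mulVecLin_apply] using this
    have lhs : (Matrix.mulVecLin M) (ρ g f).ofLp x = ∑ y, M x y * f (g⁻¹ • y) := by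
      simp [Matrix.mulVecLin_apply, Matrix.mulVec, dotProduct]
      rfl
    have step : ∀ y : X, M x y * f (g⁻¹ • y) = M (g⁻¹ • x) (g⁻¹ • y) * f (g⁻¹ • y) := by
      intro y
      have := hinv g (g⁻¹ • x) (g⁻¹ • y)
      rw [smul_inv_smul, smul_inv_smul] at this
      rw [this]
    calc (Matrix.mulVecLin M) (ρ g f).ofLp x
        = ∑ y, M x y * f (g⁻¹ • y) := lhs
      _ = ∑ y, M (g⁻¹ • x) (g⁻¹ • y) * f (g⁻¹ • y) := Finset.sum_congr rfl (fun y _ => step y)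
      _ = ∑ z, M (g⁻¹ • x) z * f z :=
          Fintype.sum_equiv (MulAction.toPerm g⁻¹) _ _ (fun y => rfl)
      _ = Matrix.mulVec M f.ofLp (g⁻¹ • x) := by
          simp [Matrix.mulVec, dotProduct]
      _ = μ * f (g⁻¹ • x) := hfx
      _ = (μ • (ρ g f).ofLp) x := rfl
  -- nontriviality on the eigenspace
  have hEnt : ∃ g : G, ∃ v ∈ E, ρ g v ≠ v := by
    obtain ⟨f, hf, g, hne⟩ := hact
    exact ⟨g, WithLp.toLp 2 f, hf, fun h => hne (congrArg WithLp.ofLp h)⟩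
  -- find an irreducible nontrivial invariant subspace
  obtain ⟨W', hW'E, hW'inv, hW'nt, hW'irr⟩ := exists_irred ρ hρ E hEinv hEnt
  -- transport to a Type-0 model
  set n := Module.finrank ℂ W' with hndef
  let b : Module.Basis (Fin n) ℂ W' := Module.finBasis ℂ W'
  let e : W' ≃ₗ[ℂ] (Fin n → ℂ) := b.equivFun
  let ρW : Representation ℂ G W' := resRep ρ W' hW'inv
  let ρ0 : Representation ℂ G (Fin n → ℂ) := conjRep e ρW
  have hρ0W : ∀ (g : G) (w : W'), ρ0 g (e w) = e (ρW g w) := by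
    intro g w
    show e.conj (ρW g) (e w) = _
    simp [LinearEquiv.conj_apply]
  have hk0 := hk (Fin n → ℂ) ρ0 ?_ ?_
  · calc k ≤ Module.finrank ℂ (Fin n → ℂ) := hk0
      _ = n := by simp
      _ ≤ Module.finrank ℂ E := Submodule.finrank_mono hW'E
      _ = Module.finrank ℂ (Module.End.eigenspace (Matrix.mulVecLin M) μ) := by
          rw [hEdef, Submodule.comap_equiv_eq_map_symm]
          exact (LinearEquiv.submoduleMap _ _).finrank_eq.symm
  · -- irreducibility
    intro S hSinv
    set T : Submodule ℂ W' := S.comap (e : W' →ₗ[ℂ] (Fin n → ℂ)) with hTdef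
    set U : Submodule ℂ (EuclideanSpace ℂ X) := T.map W'.subtype with hUdef
    have hUW' : U ≤ W' := by
      rw [hUdef]
      exact Submodule.map_subtype_le W' T
    have hUinv : ∀ (g : G), ∀ v ∈ U, ρ g v ∈ U := by
      rintro g v ⟨w, hw, rfl⟩
      refine ⟨ρW g w, ?_, rfl⟩
      show e (ρW g w) ∈ S
      rw [← hρ0W]
      exact hSinv g _ hw
    have hS : S = T.map (e : W' →ₗ[ℂ] (Fin n → ℂ)) := by
      rw [hTdef, Submodule.map_comap_eq_self]
      rw [LinearEquiv.range]
      exact le_top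
    rcases hW'irr U hUW' hUinv with h | h
    · left
      have hT : T = ⊥ :=
        Submodule.map_injective_of_injective W'.injective_subtype (by simpa [hUdef] using h)
      rw [hS, hT, Submodule.map_bot]
    · right
      have hT : T = ⊤ := by
        apply Submodule.map_injective_of_injective W'.injective_subtype
        rw [Submodule.map_subtype_top]
        simpa [hUdef] using h
      rw [hS, hT, Submodule.map_top, LinearEquiv.range]
  · -- nontriviality
    obtain ⟨g, v, hv, hne⟩ := hW'nt
    refine ⟨g, fun h1 => hne ?_⟩
    have : ρ0 g (e ⟨v, hv⟩) = e ⟨v, hv⟩ := by rw [h1]; rfl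
    rw [hρ0W] at this
    have h2 : ρW g ⟨v, hv⟩ = ⟨v, hv⟩ := e.injective this
    exact congrArg Subtype.val h2
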